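/- The content function is injective on charged partitions: if |λ,s⟩ and |λ′,s′⟩ are charged partitions such that O_{|λ,s⟩}(u) = O_{|λ′,s′⟩}(u) as elements of the field of rational functions ℚ(u), then λ = λ′ and s = s′. -/

import Mathlib

/-!
The content function is injective on charged partitions.

A partition is encoded by its Young diagram (Mathlib's `YoungDiagram`, a finite lower set
of boxes in `ℕ × ℕ`).  A box `c` is *addable* for `μ` if it is not a cell of `μ` and adding
it again yields the Young diagram of a partition (i.e. a lower set); it is *removable* if it
is a cell of `μ` and deleting it yields the Young diagram of a partition.  For `s : ℤ` the
`s`-shifted content of a box `c = (i, j)` is `s + j - i`.  The content function of the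
charged partition `|μ, s⟩` is
`O_{|μ,s⟩}(u) = (∏_{b addable} (u - cont^s b)) / (∏_{b removable} (u - cont^s b)) ∈ ℚ(u)`.
-/

open scoped Classical

noncomputable section

/-- A box `c` is addable for the Young diagram `μ`. -/
def IsAddable (μ : YoungDiagram) (c : ℕ × ℕ) : Prop :=
  c ∉ μ ∧ IsLowerSet (insert c (μ.cells : Set (ℕ × ℕ)))

/-- A box `c` is removable for the Young diagram `μ`. -/
def IsRemovable (μ : YoungDiagram) (c : ℕ × ℕ) : Prop :=
  c ∈ μ ∧ IsLowerSet ((μ.cells : Set (ℕ × ℕ)) \ {c})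

/-- The `s`-shifted content of a box `c = (i, j)` is `s + j - i`. -/
def cont (s : ℤ) (c : ℕ × ℕ) : ℤ := s + (c.2 : ℤ) - (c.1 : ℤ)

/-- The content function of the charged partition `|μ, s⟩`, as an element of `ℚ(u)`. -/
def contentFun (μ : YoungDiagram) (s : ℤ) : RatFunc ℚ :=
  (∏ᶠ c ∈ {c | IsAddable μ c}, (RatFunc.X - RatFunc.C ((cont s c : ℤ) : ℚ))) /
    (∏ᶠ c ∈ {c | IsRemovable μ c}, (RatFunc.X - RatFunc.C ((cont s c : ℤ) : ℚ)))

lemma mem_cells_set {μ : YoungDiagram} {p : ℕ × ℕ} :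
    p ∈ (μ.cells : Set (ℕ × ℕ)) ↔ p.2 < μ.rowLen p.1 := by
  cases p
  simp [YoungDiagram.mem_iff_lt_rowLen]

lemma isAddable_iff {μ : YoungDiagram} {i j : ℕ} :
    IsAddable μ (i, j) ↔ j = μ.rowLen i ∧ (i = 0 ∨ μ.rowLen i < μ.rowLen (i - 1)) := by
  constructor
  · rintro ⟨hne, hlow⟩
    rw [YoungDiagram.mem_iff_lt_rowLen, not_lt] at hne
    have hmem : ∀ a b : ℕ, a ≤ i → b ≤ j → (a, b) ≠ (i, j) → b < μ.rowLen a := by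
      intro a b ha hb hab
      have := hlow (a := (i, j)) (b := (a, b)) ⟨ha, hb⟩ (Set.mem_insert _ _)
      rcases this with h | h
      · exact absurd h hab
      · exact mem_cells_set.mp h
    have hj : j = μ.rowLen i := by
      by_cases h0 : j = 0
      · omega
      · have := hmem i (j - 1) le_rfl (by omega) (by simp; omega)
        omega
    refine ⟨hj, ?_⟩
    by_cases hi0 : i = 0
    · exact Or.inl hi0
    · right
      have := hmem (i - 1) j (by omega) le_rfl (by simp; omega)
      omega
  · rintro ⟨hj, hcase⟩
    subst hj
    refine ⟨by rw [YoungDiagram.mem_iff_lt_rowLen]; omega, ?_⟩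
    rintro ⟨a, b⟩ ⟨c, d⟩ ⟨hca, hdb⟩ hp
    simp only [Prod.fst, Prod.snd] at hca hdb
    rcases Set.mem_insert_iff.mp hp with heq | hp
    · -- (a,b) = (i, rowLen i), (c,d) ≤ (a,b)
      have ha : a = i := congrArg Prod.fst heq
      have hb : b = μ.rowLen i := congrArg Prod.snd heq
      by_cases hq : (c, d) = (i, μ.rowLen i)
      · exact hq ▸ Set.mem_insert _ _
      · right
        have hq' : c ≠ i ∨ d ≠ μ.rowLen i := by
          by_contra hcon
          push_neg at hcon
          exact hq (by rw [hcon.1, hcon.2])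
        have : d < μ.rowLen c := by
          by_cases hci : c = i
          · subst hci
            rcases hq' with h | h
            · omega
            · omega
          · have hci' : c < i := by omega
            have hi0 : i ≠ 0 := by omega
            rcases hcase with h | h
            · omega
            · have : μ.rowLen (i - 1) ≤ μ.rowLen c := μ.rowLen_anti c (i - 1) (by omega)
              omega
        exact mem_cells_set.mpr this
    · right
      exact μ.isLowerSet (a := (a, b)) (b := (c, d)) ⟨hca, hdb⟩ hp

lemma isRemovable_iff {μ : YoungDiagram} {i j : ℕ} :
    IsRemovable μ (i, j) ↔ j + 1 = μ.rowLen i ∧ μ.rowLen (i + 1) < μ.rowLen i := by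
  constructor
  · rintro ⟨hmem, hlow⟩
    rw [YoungDiagram.mem_iff_lt_rowLen] at hmem
    have hj : j + 1 = μ.rowLen i := by
      by_contra hne
      have h1 : (i, j + 1) ∈ (μ.cells : Set (ℕ × ℕ)) \ {(i, j)} := by
        refine ⟨mem_cells_set.mpr (by simp; omega), by simp⟩
      have := hlow (a := (i, j + 1)) (b := (i, j)) ⟨le_rfl, by omega⟩ h1
      exact this.2 rfl
    refine ⟨hj, ?_⟩
    by_contra hne
    push_neg at hne
    have h1 : (i + 1, j) ∈ (μ.cells : Set (ℕ × ℕ)) \ {(i, j)} := by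
      refine ⟨mem_cells_set.mpr (by simp; omega), by simp⟩
    have := hlow (a := (i + 1, j)) (b := (i, j)) ⟨by omega, le_rfl⟩ h1
    exact this.2 rfl
  · rintro ⟨hj, hrow⟩
    refine ⟨by rw [YoungDiagram.mem_iff_lt_rowLen]; omega, ?_⟩
    rintro ⟨a, b⟩ ⟨c, d⟩ ⟨hca, hdb⟩ ⟨hp, hpne⟩
    have hp' : b < μ.rowLen a := mem_cells_set.mp hp
    refine ⟨mem_cells_set.mpr (by exact lt_of_le_of_lt hdb (lt_of_lt_of_le hp' (μ.rowLen_anti c a hca)) ), ?_⟩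
    simp only [Set.mem_singleton_iff, Prod.mk.injEq, not_and] at hpne ⊢
    simp only [Prod.fst, Prod.snd] at hca hdb
    intro hc
    intro hd
    -- (c,d) = (i,j), (a,b) ≥ (i,j), (a,b) ∈ μ, (a,b) ≠ (i,j)
    by_cases ha : a = i
    · have hb : b ≠ j := hpne ha
      rw [ha] at hp'
      omega
    · have ha' : i + 1 ≤ a := by omega
      have h2 : μ.rowLen a ≤ μ.rowLen (i + 1) := μ.rowLen_anti (i + 1) a ha'
      omega






/-- The beta-numbers (Maya diagram) of the charged partition. -/
def beta (μ : YoungDiagram) (s : ℤ) (i : ℕ) : ℤ := s + (μ.rowLen i : ℤ) - i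

lemma beta_strictAnti (μ : YoungDiagram) (s : ℤ) : StrictAnti (beta μ s) := by
  apply strictAnti_nat_of_succ_lt
  intro n
  have := μ.rowLen_anti n (n + 1) (by omega)
  unfold beta
  push_cast
  omega

lemma rowLen_eq_zero_iff {μ : YoungDiagram} {i : ℕ} :
    μ.rowLen i = 0 ↔ μ.colLen 0 ≤ i := by
  rw [← not_lt, ← YoungDiagram.mem_iff_lt_colLen, YoungDiagram.mem_iff_lt_rowLen]
  omega

lemma beta_eq_of_large {μ : YoungDiagram} {s : ℤ} {i : ℕ} (h : μ.colLen 0 ≤ i) :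
    beta μ s i = s - i := by
  unfold beta
  rw [rowLen_eq_zero_iff.mpr h]
  simp

def Bset (μ : YoungDiagram) (s : ℤ) : Set ℤ := Set.range (beta μ s)

def ASet (μ : YoungDiagram) (s : ℤ) : Set ℤ := cont s '' {c | IsAddable μ c}
def RSet (μ : YoungDiagram) (s : ℤ) : Set ℤ := cont s '' {c | IsRemovable μ c}

lemma ASet_eq (μ : YoungDiagram) (s : ℤ) :
    ASet μ s = {x | x ∈ Bset μ s ∧ x + 1 ∉ Bset μ s} := by
  ext x
  constructor
  · rintro ⟨⟨i, j⟩, hc, rfl⟩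
    obtain ⟨hj, hcase⟩ := isAddable_iff.mp hc
    have hcont : cont s (i, j) = beta μ s i := by
      simp [cont, beta, hj]
    rw [hcont]
    refine ⟨⟨i, rfl⟩, ?_⟩
    rintro ⟨k, hk⟩
    have hki : k < i := by
      by_contra hge
      have := (beta_strictAnti μ s).antitone (not_lt.mp hge)
      omega
    have hi0 : i ≠ 0 := by omega
    rcases hcase with h | h
    · exact hi0 h
    · have h1 : beta μ s (i - 1) ≥ beta μ s i + 2 := by
        unfold beta; omega
      have h2 : beta μ s k ≥ beta μ s (i - 1) :=
        (beta_strictAnti μ s).antitone (by omega)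
      omega
  · rintro ⟨⟨i, rfl⟩, hnot⟩
    refine ⟨(i, μ.rowLen i), ?_, by simp [cont, beta]⟩
    rw [Set.mem_setOf_eq, isAddable_iff]
    refine ⟨rfl, ?_⟩
    by_cases hi0 : i = 0
    · exact Or.inl hi0
    · right
      have h1 : beta μ s (i - 1) ≠ beta μ s i + 1 := fun h => hnot ⟨i - 1, h⟩
      have h2 : beta μ s i < beta μ s (i - 1) := beta_strictAnti μ s (by omega)
      unfold beta at h1 h2
      have := μ.rowLen_anti (i - 1) i (by omega)

      omega

lemma RSet_eq (μ : YoungDiagram) (s : ℤ) :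
    RSet μ s = {x | x ∉ Bset μ s ∧ x + 1 ∈ Bset μ s} := by
  ext x
  constructor
  · rintro ⟨⟨i, j⟩, hc, rfl⟩
    obtain ⟨hj, hrow⟩ := isRemovable_iff.mp hc
    have hcont : cont s (i, j) = beta μ s i - 1 := by
      simp only [cont, beta]; omega
    rw [hcont]
    constructor
    · rintro ⟨k, hk⟩
      have hki : i < k := by
        by_contra hge
        have := (beta_strictAnti μ s).antitone (not_lt.mp hge)
        omega
      have h1 : beta μ s (i + 1) ≤ beta μ s i - 2 := by
        unfold beta; push_cast; omega
      have h2 : beta μ s k ≤ beta μ s (i + 1) :=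
        (beta_strictAnti μ s).antitone (by omega)
      omega
    · exact ⟨i, by omega⟩
  · rintro ⟨hnot, ⟨i, hi⟩⟩
    have h1 : beta μ s (i + 1) ≠ beta μ s i - 1 := fun h => hnot (⟨i + 1, by omega⟩)
    have h2 : beta μ s (i + 1) < beta μ s i := beta_strictAnti μ s (by omega)
    have h3 : μ.rowLen (i + 1) < μ.rowLen i := by
      unfold beta at h1 h2
      have := μ.rowLen_anti i (i + 1) (by omega)
      push_cast at h1 h2
      omega
    refine ⟨(i, μ.rowLen i - 1), ?_, ?_⟩
    · rw [Set.mem_setOf_eq, isRemovable_iff]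
      exact ⟨by omega, h3⟩
    · simp only [cont, beta] at hi ⊢
      have : μ.rowLen i ≠ 0 := by omega
      push_cast [Nat.cast_sub (by omega : 1 ≤ μ.rowLen i)]
      omega

lemma addable_finite (μ : YoungDiagram) : {c | IsAddable μ c}.Finite := by
  apply Set.Finite.subset ((Set.finite_Iic (μ.colLen 0)).image (fun i => (i, μ.rowLen i)))
  rintro ⟨i, j⟩ hc
  obtain ⟨hj, hcase⟩ := isAddable_iff.mp hc
  refine ⟨i, ?_, by rw [hj]⟩
  simp only [Set.mem_Iic]
  rcases hcase with h | h
  · omega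
  · have : μ.rowLen (i - 1) ≠ 0 := by omega
    rw [Ne, rowLen_eq_zero_iff] at this
    omega

lemma removable_finite (μ : YoungDiagram) : {c | IsRemovable μ c}.Finite := by
  apply Set.Finite.subset ((Set.finite_Iic (μ.colLen 0)).image (fun i => (i, μ.rowLen i - 1)))
  rintro ⟨i, j⟩ hc
  obtain ⟨hj, hrow⟩ := isRemovable_iff.mp hc
  have hmem : i ∈ Set.Iic (μ.colLen 0) := by
    simp only [Set.mem_Iic]
    have : μ.rowLen i ≠ 0 := by omega
    rw [Ne, rowLen_eq_zero_iff] at this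
    omega
  exact ⟨i, hmem, by simp only [Prod.mk.injEq]; exact ⟨trivial, by omega⟩⟩

lemma cont_injOn_addable (μ : YoungDiagram) (s : ℤ) :
    Set.InjOn (cont s) {c | IsAddable μ c} := by
  rintro ⟨i, j⟩ hc ⟨i', j'⟩ hc' heq
  obtain ⟨hj, -⟩ := isAddable_iff.mp hc
  obtain ⟨hj', -⟩ := isAddable_iff.mp hc'
  have h1 : beta μ s i = beta μ s i' := by
    simp only [cont] at heq
    simp only [beta]
    omega
  have h2 : i = i' := (beta_strictAnti μ s).injective h1
  subst h2
  simp [hj, hj']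

lemma cont_injOn_removable (μ : YoungDiagram) (s : ℤ) :
    Set.InjOn (cont s) {c | IsRemovable μ c} := by
  rintro ⟨i, j⟩ hc ⟨i', j'⟩ hc' heq
  obtain ⟨hj, -⟩ := isRemovable_iff.mp hc
  obtain ⟨hj', -⟩ := isRemovable_iff.mp hc'
  have h1 : beta μ s i = beta μ s i' := by
    simp only [cont] at heq
    simp only [beta]
    omega
  have h2 : i = i' := (beta_strictAnti μ s).injective h1
  subst h2
  have : j = j' := by omega
  simp [this]





/-- Two strictly decreasing sequences of integers with the same range are equal. -/
lemma strictAnti_eq_of_range_eq {f g : ℕ → ℤ} (hf : StrictAnti f) (hg : StrictAnti g)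
    (h : Set.range f = Set.range g) : f = g := by
  funext n
  induction n using Nat.strong_induction_on with
  | _ n ih =>
    have h1 : f n ≤ g n := by
      have : f n ∈ Set.range g := h ▸ Set.mem_range_self n
      obtain ⟨m, hm⟩ := this
      have hmn : n ≤ m := by
        by_contra hlt
        push_neg at hlt
        have h3 : g m = f m := (ih m hlt).symm
        have h4 : f n = f m := hm.symm.trans h3
        exact absurd (hf.injective h4) (by omega)
      exact hm ▸ hg.antitone hmn
    have h2 : g n ≤ f n := by
      have : g n ∈ Set.range f := h.symm ▸ Set.mem_range_self n
      obtain ⟨m, hm⟩ := this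
      have hmn : n ≤ m := by
        by_contra hlt
        push_neg at hlt
        have h3 : f m = g m := ih m hlt
        have h4 : g n = g m := hm.symm.trans h3
        exact absurd (hg.injective h4) (by omega)
      exact hm ▸ hf.antitone hmn
    omega

/-- `B` determines the charged partition. -/
lemma eq_of_Bset_eq {μ μ' : YoungDiagram} {s s' : ℤ} (h : Bset μ s = Bset μ' s') :
    μ = μ' ∧ s = s' := by
  have hb : beta μ s = beta μ' s' :=
    strictAnti_eq_of_range_eq (beta_strictAnti μ s) (beta_strictAnti μ' s') h
  have hs : s = s' := by
    set N := max (μ.colLen 0) (μ'.colLen 0) with hN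
    have h1 : beta μ s N = s - N := beta_eq_of_large (le_max_left _ _)
    have h2 : beta μ' s' N = s' - N := beta_eq_of_large (le_max_right _ _)
    have := congrFun hb N
    omega
  refine ⟨?_, hs⟩
  have hrow : ∀ i, μ.rowLen i = μ'.rowLen i := by
    intro i
    have := congrFun hb i
    simp only [beta, hs] at this
    omega
  ext ⟨i, j⟩
  simp only [YoungDiagram.mem_cells, YoungDiagram.mem_iff_lt_rowLen, hrow]

/-- `B` is recovered from `A` and `R` by downward recursion. -/
lemma Bset_eq_of_AR_eq {μ μ' : YoungDiagram} {s s' : ℤ}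
    (hA : {x | x ∈ Bset μ s ∧ x + 1 ∉ Bset μ s} = {x | x ∈ Bset μ' s' ∧ x + 1 ∉ Bset μ' s'})
    (hR : {x | x ∉ Bset μ s ∧ x + 1 ∈ Bset μ s} = {x | x ∉ Bset μ' s' ∧ x + 1 ∈ Bset μ' s'}) :
    Bset μ s = Bset μ' s' := by
  set B := Bset μ s
  set B' := Bset μ' s'
  have hrec : ∀ (C : Set ℤ) (x : ℤ), x ∈ C ↔
      (x ∈ {y | y ∈ C ∧ y + 1 ∉ C} ∨ (x + 1 ∈ C ∧ x ∉ {y | y ∉ C ∧ y + 1 ∈ C})) := by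
    intro C x
    simp only [Set.mem_setOf_eq]
    tauto
  have hub : ∀ x ∈ B, x ≤ beta μ s 0 := by
    rintro x ⟨i, rfl⟩
    exact (beta_strictAnti μ s).antitone (Nat.zero_le i)
  have hub' : ∀ x ∈ B', x ≤ beta μ' s' 0 := by
    rintro x ⟨i, rfl⟩
    exact (beta_strictAnti μ' s').antitone (Nat.zero_le i)
  set M := max (beta μ s 0) (beta μ' s' 0) with hM
  have key : ∀ n : ℕ, ((M + 1 - n) ∈ B ↔ (M + 1 - n) ∈ B') := by
    intro n
    induction n with
    | zero =>
      simp only [Nat.cast_zero, sub_zero]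
      constructor
      · intro hx; exact absurd (hub _ hx) (by omega)
      · intro hx; exact absurd (hub' _ hx) (by omega)
    | succ n ih =>
      rw [hrec B, hrec B', hA, hR]
      have harith : M + 1 - (n + 1 : ℕ) + 1 = M + 1 - n := by push_cast; ring
      rw [harith, ih]
  ext x
  by_cases hx : x ≤ M
  · have hn : x = M + 1 - ((M + 1 - x).toNat : ℤ) := by
      rw [Int.toNat_of_nonneg (by omega)]
      ring
    rw [hn]
    exact key _
  · constructor
    · intro hmem; exact absurd (hub _ hmem) (by omega)
    · intro hmem; exact absurd (hub' _ hmem) (by omega)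

open Polynomial

/-- From equality of the quotients of products of distinct linear factors with
disjoint root sets, deduce equality of the root finsets. -/
lemma finsets_eq_of_div_eq (FA FR FA' FR' : Finset ℤ)
    (hd : Disjoint FA FR) (hd' : Disjoint FA' FR')
    (h : (algebraMap (Polynomial ℚ) (RatFunc ℚ) (∏ x ∈ FA, (X - C (x : ℚ)))) /
          (algebraMap (Polynomial ℚ) (RatFunc ℚ) (∏ x ∈ FR, (X - C (x : ℚ)))) =
        (algebraMap (Polynomial ℚ) (RatFunc ℚ) (∏ x ∈ FA', (X - C (x : ℚ)))) /
          (algebraMap (Polynomial ℚ) (RatFunc ℚ) (∏ x ∈ FR', (X - C (x : ℚ))))) :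
    FA = FA' ∧ FR = FR' := by
  have hmonic : ∀ F : Finset ℤ, (∏ x ∈ F, (X - C (x : ℚ))).Monic := fun F =>
    monic_prod_of_monic _ _ fun x _ => monic_X_sub_C _
  have hne : ∀ F : Finset ℤ, (∏ x ∈ F, (X - C (x : ℚ))) ≠ 0 := fun F => (hmonic F).ne_zero
  have hcross : (∏ x ∈ FA, (X - C (x : ℚ))) * (∏ x ∈ FR', (X - C (x : ℚ))) =
      (∏ x ∈ FA', (X - C (x : ℚ))) * (∏ x ∈ FR, (X - C (x : ℚ))) := by
    apply RatFunc.algebraMap_injective (K := ℚ)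
    rw [map_mul, map_mul]
    rw [div_eq_div_iff (RatFunc.algebraMap_ne_zero (hne FR))
      (RatFunc.algebraMap_ne_zero (hne FR'))] at h
    exact h
  have hroots : ∀ F : Finset ℤ, (∏ x ∈ F, (X - C (x : ℚ))).roots
      = F.val.map (fun x : ℤ => (x : ℚ)) := by
    intro F
    rw [Finset.prod_eq_multiset_prod]
    have : F.val.map (fun x : ℤ => X - C (x : ℚ))
        = (F.val.map (fun x : ℤ => (x : ℚ))).map (fun a : ℚ => X - C a) := by
      rw [Multiset.map_map]
      rfl
    rw [this, roots_multiset_prod_X_sub_C]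
  have he : FA.val.map (fun x : ℤ => (x : ℚ)) + FR'.val.map (fun x : ℤ => (x : ℚ))
      = FA'.val.map (fun x : ℤ => (x : ℚ)) + FR.val.map (fun x : ℤ => (x : ℚ)) := by
    have h1 := congrArg Polynomial.roots hcross
    rw [roots_mul (mul_ne_zero (hne FA) (hne FR')),
        roots_mul (mul_ne_zero (hne FA') (hne FR)), hroots, hroots, hroots, hroots] at h1
    exact h1
  have hcount : ∀ (F : Finset ℤ) (x : ℤ),
      (F.val.map (fun x : ℤ => (x : ℚ))).count ((x : ℚ)) = if x ∈ F then 1 else 0 := by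
    intro F x
    rw [Multiset.count_map_eq_count' _ _ Int.cast_injective]
    split_ifs with hx
    · exact Multiset.count_eq_one_of_mem F.nodup hx
    · exact Multiset.count_eq_zero_of_notMem hx
  have key : ∀ x : ℤ, (if x ∈ FA then 1 else 0) + (if x ∈ FR' then 1 else 0)
      = (if x ∈ FA' then 1 else 0) + (if x ∈ FR then 1 else 0) := by
    intro x
    have := congrArg (Multiset.count ((x : ℚ))) he
    rwa [Multiset.count_add, Multiset.count_add, hcount, hcount, hcount, hcount] at this
  constructor
  · ext x
    have hk := key x
    have h1 : ¬(x ∈ FA ∧ x ∈ FR) := fun ⟨h1, h2⟩ => Finset.disjoint_left.mp hd h1 h2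
    have h2 : ¬(x ∈ FA' ∧ x ∈ FR') := fun ⟨h1, h2⟩ => Finset.disjoint_left.mp hd' h1 h2
    split_ifs at hk <;> simp at hk <;> tauto
  · ext x
    have hk := key x
    have h1 : ¬(x ∈ FA ∧ x ∈ FR) := fun ⟨h1, h2⟩ => Finset.disjoint_left.mp hd h1 h2
    have h2 : ¬(x ∈ FA' ∧ x ∈ FR') := fun ⟨h1, h2⟩ => Finset.disjoint_left.mp hd' h1 h2
    split_ifs at hk <;> simp at hk <;> tauto

open Polynomial in
def FinA (μ : YoungDiagram) (s : ℤ) : Finset ℤ :=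
  (addable_finite μ).toFinset.image (cont s)

open Polynomial in
def FinR (μ : YoungDiagram) (s : ℤ) : Finset ℤ :=
  (removable_finite μ).toFinset.image (cont s)

lemma coe_FinA (μ : YoungDiagram) (s : ℤ) : (FinA μ s : Set ℤ) = ASet μ s := by
  rw [FinA, Finset.coe_image, Set.Finite.coe_toFinset, ASet]

lemma coe_FinR (μ : YoungDiagram) (s : ℤ) : (FinR μ s : Set ℤ) = RSet μ s := by
  rw [FinR, Finset.coe_image, Set.Finite.coe_toFinset, RSet]

open Polynomial in
lemma finprod_addable (μ : YoungDiagram) (s : ℤ) :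
    (∏ᶠ c ∈ {c | IsAddable μ c}, (RatFunc.X - RatFunc.C ((cont s c : ℤ) : ℚ)))
      = algebraMap (Polynomial ℚ) (RatFunc ℚ) (∏ x ∈ FinA μ s, (X - C (x : ℚ))) := by
  rw [← (addable_finite μ).coe_toFinset, finprod_mem_coe_finset, map_prod, FinA,
    Finset.prod_image (fun x hx y hy hxy => cont_injOn_addable μ s
      ((addable_finite μ).mem_toFinset.mp hx) ((addable_finite μ).mem_toFinset.mp hy) hxy)]
  refine Finset.prod_congr rfl fun c _ => ?_
  rw [map_sub, RatFunc.algebraMap_X, RatFunc.algebraMap_C]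

open Polynomial in
lemma finprod_removable (μ : YoungDiagram) (s : ℤ) :
    (∏ᶠ c ∈ {c | IsRemovable μ c}, (RatFunc.X - RatFunc.C ((cont s c : ℤ) : ℚ)))
      = algebraMap (Polynomial ℚ) (RatFunc ℚ) (∏ x ∈ FinR μ s, (X - C (x : ℚ))) := by
  rw [← (removable_finite μ).coe_toFinset, finprod_mem_coe_finset, map_prod, FinR,
    Finset.prod_image (fun x hx y hy hxy => cont_injOn_removable μ s
      ((removable_finite μ).mem_toFinset.mp hx) ((removable_finite μ).mem_toFinset.mp hy) hxy)]
  refine Finset.prod_congr rfl fun c _ => ?_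
  rw [map_sub, RatFunc.algebraMap_X, RatFunc.algebraMap_C]

lemma FinA_disjoint_FinR (μ : YoungDiagram) (s : ℤ) : Disjoint (FinA μ s) (FinR μ s) := by
  rw [Finset.disjoint_left]
  intro x hxA hxR
  have hA : x ∈ ASet μ s := by rw [← coe_FinA]; exact hxA
  have hR : x ∈ RSet μ s := by rw [← coe_FinR]; exact hxR
  rw [ASet_eq] at hA
  rw [RSet_eq] at hR
  exact hR.1 hA.1

/-- The content function is injective on charged partitions. -/
theorem contentFun_injective (μ μ' : YoungDiagram) (s s' : ℤ)
    (h : contentFun μ s = contentFun μ' s') : μ = μ' ∧ s = s' := by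
  rw [contentFun, contentFun, finprod_addable, finprod_addable, finprod_removable,
    finprod_removable] at h
  obtain ⟨hFA, hFR⟩ := finsets_eq_of_div_eq _ _ _ _
    (FinA_disjoint_FinR μ s) (FinA_disjoint_FinR μ' s') h
  have hA : ASet μ s = ASet μ' s' := by
    rw [← coe_FinA, ← coe_FinA, hFA]
  have hR : RSet μ s = RSet μ' s' := by
    rw [← coe_FinR, ← coe_FinR, hFR]
  rw [ASet_eq, ASet_eq] at hA
  rw [RSet_eq, RSet_eq] at hR
  exact eq_of_Bset_eq (Bset_eq_of_AR_eq hA hR)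


end
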